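/- Let $t \ge 2$ and let $G$ be a simple graph on $n$ vertices. Then for every $x \in \Delta^{n-1}$ one has $\Phi(G,x) \ge 0$, i.e., $\sum_{v \in V(G)} \frac{x_v}{c(v)^t}\binom{c(v)}{t} \ge \sum_{K_t \subseteq G} \prod_{v \in V(K_t)} x_v$, where the second sum runs over all copies of $K_t$ in $G$. -/

import Mathlib

open Finset
open scoped Classical

/-- The order of the largest clique of `G` containing the vertex `v`. -/
noncomputable def cliqueAt {n : ℕ} (G : SimpleGraph (Fin n)) (v : Fin n) : ℕ :=
  ((univ : Finset (Finset (Fin n))).filter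
    (fun s : Finset (Fin n) => G.IsClique (s : Set (Fin n)) ∧ v ∈ s)).sup Finset.card

/-- The set of copies of `K_t` in `G`, as `t`-element vertex sets inducing cliques. -/
noncomputable def ktCliques {n : ℕ} (G : SimpleGraph (Fin n)) (t : ℕ) :
    Finset (Finset (Fin n)) :=
  (univ : Finset (Finset (Fin n))).filter
    (fun s : Finset (Fin n) => s.card = t ∧ G.IsClique (s : Set (Fin n)))

/-- `N(G, K_t)`, the number of copies of `K_t` in `G`. -/
noncomputable def numKt {n : ℕ} (G : SimpleGraph (Fin n)) (t : ℕ) : ℕ :=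
  (ktCliques G t).card

/-- The standard simplex `Δ^{n-1}`. -/
def simplex (n : ℕ) : Set (Fin n → ℝ) :=
  {x | (∀ i, 0 ≤ x i) ∧ ∑ i, x i = 1}

/-- `Φ(G, x) = A(G,x) - B(G,x)`. -/
noncomputable def PhiFn {n : ℕ} (G : SimpleGraph (Fin n)) (t : ℕ) (x : Fin n → ℝ) : ℝ :=
  (∑ v, x v * ((cliqueAt G v).choose t : ℝ) / (cliqueAt G v : ℝ) ^ t)
    - ∑ s ∈ ktCliques G t, ∏ v ∈ s, x v

/-- The support of `x`, as a finset. -/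
noncomputable def suppF {n : ℕ} (x : Fin n → ℝ) : Finset (Fin n) :=
  (univ : Finset (Fin n)).filter (fun v => 0 < x v)

/-- `x` is a minimizer of `Φ(G, ·)` over the simplex. -/
def IsMinimizer {n : ℕ} (G : SimpleGraph (Fin n)) (t : ℕ) (x : Fin n → ℝ) : Prop :=
  x ∈ simplex n ∧ ∀ y ∈ simplex n, PhiFn G t x ≤ PhiFn G t y

/-- `δ_{ij}(x)`. -/
noncomputable def deltaFn {n : ℕ} (G : SimpleGraph (Fin n)) (t : ℕ) (x : Fin n → ℝ)
    (i j : Fin n) : ℝ :=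
  (((cliqueAt G i).choose t : ℝ) / (cliqueAt G i : ℝ) ^ t
      - ((cliqueAt G j).choose t : ℝ) / (cliqueAt G j : ℝ) ^ t)
    - ((∑ s ∈ (ktCliques G (t - 1)).filter (fun s => ∀ v ∈ s, G.Adj i v), ∏ v ∈ s, x v)
      - (∑ s ∈ (ktCliques G (t - 1)).filter (fun s => ∀ v ∈ s, G.Adj j v), ∏ v ∈ s, x v))

/-- `G` is a regular complete multipartite graph: the vertices can be colored so that
adjacency is exactly "different colors" and all color classes have the same size. -/
def IsRegularCompleteMultipartite {n : ℕ} (G : SimpleGraph (Fin n)) : Prop :=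
  ∃ (r : ℕ) (f : Fin n → Fin r),
    (∀ u v, G.Adj u v ↔ f u ≠ f v) ∧
    (∀ a b : Fin r,
      ((univ : Finset (Fin n)).filter (fun v => f v = a)).card =
        ((univ : Finset (Fin n)).filter (fun v => f v = b)).card)


lemma amgm (t : ℕ) (m p : ℝ) (hm : 0 ≤ m) (hp : 0 ≤ p) :
    ((t:ℝ)+1) * m * p^t ≤ m^(t+1) + t * p^(t+1) := by
  induction t with
  | zero => simp
  | succ t ih =>
    have h2 : 0 ≤ (m^(t+1) - p^(t+1)) * (m - p) := by
      rcases le_total m p with h | h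
      · nlinarith [mul_nonneg (sub_nonneg.2 (pow_le_pow_left₀ hm h (t+1))) (sub_nonneg.2 h)]
      · nlinarith [mul_nonneg (sub_nonneg.2 (pow_le_pow_left₀ hp h (t+1))) (sub_nonneg.2 h)]
    have h1' : ((t:ℝ)+1) * m * p^(t+1) ≤ m^(t+1) * p + (t:ℝ) * p^(t+1) * p := by
      calc ((t:ℝ)+1)*m*p^(t+1) = ((t:ℝ)+1)*m*p^t*p := by rw [pow_succ]; ring
        _ ≤ (m^(t+1) + t*p^(t+1))*p := mul_le_mul_of_nonneg_right ih hp
        _ = m^(t+1)*p + t*p^(t+1)*p := by ring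
    push_cast
    rw [pow_succ m (t+1), pow_succ p (t+1)]
    nlinarith [h1', h2]

lemma scalar (k t : ℕ) (a p : ℝ) (ha : 0 ≤ a) (hp : 0 ≤ p) :
    (k.choose (t+1) : ℝ) * p^(t+1) + a * (k.choose t) * p^t ≤
      ((k+1).choose (t+1) : ℝ) * ((a + k*p)/((k:ℝ)+1))^(t+1) := by
  set m : ℝ := (a + k*p)/((k:ℝ)+1) with hmdef
  have hk1 : (0:ℝ) < (k:ℝ)+1 := by positivity
  have hm : 0 ≤ m := by positivity
  have hKm : a = ((k:ℝ)+1)*m - k*p := by rw [hmdef, mul_div_cancel₀ _ hk1.ne']; ring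
  have hc1 : ((k:ℝ)+1) * (k.choose t) = ((k+1).choose (t+1) : ℝ) * ((t:ℝ)+1) := by
    exact_mod_cast congrArg (Nat.cast : ℕ → ℝ) (Nat.add_one_mul_choose_eq k t)
  have hc2 : ((k+1).choose (t+1) : ℝ) = (k.choose t : ℝ) + (k.choose (t+1) : ℝ) := by
    exact_mod_cast congrArg (Nat.cast : ℕ → ℝ) (Nat.choose_succ_succ k t)
  have hC : (0:ℝ) ≤ ((k+1).choose (t+1) : ℝ) := by positivity
  have hid : (k.choose (t+1) : ℝ) * p^(t+1) + a * (k.choose t) * p^t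
      = ((k+1).choose (t+1):ℝ) * (((t:ℝ)+1)*m*p^t - (t:ℝ)*p^(t+1)) := by
    linear_combination (m*p^t - p^(t+1)) * hc1 - p^(t+1) * hc2 + ((k.choose t:ℝ))*(p^t) * hKm
  rw [hid]
  exact mul_le_mul_of_nonneg_left (by linarith [amgm t m p hm hp]) hC

lemma maclaurin {α : Type*} [DecidableEq α] (t : ℕ) (S : Finset α) (x : α → ℝ)
    (hx : ∀ v, 0 ≤ x v) :
    ∑ s ∈ S.powersetCard t, ∏ v ∈ s, x v ≤
      (S.card.choose t : ℝ) * ((∑ v ∈ S, x v) / (S.card:ℝ))^t := by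
  induction t generalizing S with
  | zero => simp
  | succ t iht =>
    induction S using Finset.induction_on with
    | empty =>
      rw [Finset.powersetCard_eq_empty.2 (by simp)]
      simp
    | @insert v S hvS ihS =>
      have hdisj : Disjoint (S.powersetCard (t+1)) ((S.powersetCard t).image (insert v)) := by
        rw [Finset.disjoint_left]
        rintro s hs hs'
        rw [Finset.mem_powersetCard] at hs
        rw [Finset.mem_image] at hs'
        obtain ⟨u, hu, rfl⟩ := hs'
        exact hvS (hs.1 (Finset.mem_insert_self v u))
      have hinj : ∀ s₁ ∈ S.powersetCard t, ∀ s₂ ∈ S.powersetCard t,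
          insert v s₁ = insert v s₂ → s₁ = s₂ := by
        intro s₁ h₁ s₂ h₂ h
        rw [Finset.mem_powersetCard] at h₁ h₂
        have e₁ : s₁ = (insert v s₁).erase v :=
          (Finset.erase_insert (fun hv => hvS (h₁.1 hv))).symm
        rw [e₁, h, Finset.erase_insert (fun hv => hvS (h₂.1 hv))]
      rw [Finset.powersetCard_succ_insert hvS, Finset.sum_union hdisj, Finset.sum_image hinj]
      have hprod : ∀ s ∈ S.powersetCard t, ∏ u ∈ insert v s, x u = x v * ∏ u ∈ s, x u := by
        intro s hs
        rw [Finset.mem_powersetCard] at hs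
        exact Finset.prod_insert (fun hv => hvS (hs.1 hv))
      rw [Finset.sum_congr rfl hprod, ← Finset.mul_sum]
      set p : ℝ := (∑ u ∈ S, x u) / (S.card : ℝ) with hpdef
      have hp : 0 ≤ p := div_nonneg (Finset.sum_nonneg fun u _ => hx u) (Nat.cast_nonneg _)
      have hσ : (S.card : ℝ) * p = ∑ u ∈ S, x u := by
        rcases Finset.eq_empty_or_nonempty S with rfl | hS
        · simp [hpdef]
        · have : (S.card : ℝ) ≠ 0 := by
            simpa using Finset.card_ne_zero_of_mem hS.choose_spec
          rw [hpdef, mul_div_cancel₀ _ this]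
      have h1 : ∑ s ∈ S.powersetCard (t+1), ∏ u ∈ s, x u ≤ (S.card.choose (t+1) : ℝ) * p^(t+1) :=
        ihS
      have h2 : x v * ∑ s ∈ S.powersetCard t, ∏ u ∈ s, x u ≤
          x v * ((S.card.choose t : ℝ) * p^t) :=
        mul_le_mul_of_nonneg_left (iht S) (hx v)
      have h3 := scalar S.card t (x v) p (hx v) hp
      rw [Finset.card_insert_of_notMem hvS, Finset.sum_insert hvS]
      have hcast : ((S.card + 1 : ℕ) : ℝ) = (S.card : ℝ) + 1 := by push_cast; ring
      calc ∑ s ∈ S.powersetCard (t+1), ∏ u ∈ s, x u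
            + x v * ∑ s ∈ S.powersetCard t, ∏ u ∈ s, x u
          ≤ (S.card.choose (t+1) : ℝ) * p^(t+1) + x v * ((S.card.choose t : ℝ) * p^t) := by
            linarith
        _ = (S.card.choose (t+1) : ℝ) * p^(t+1) + x v * (S.card.choose t : ℝ) * p^t := by ring
        _ ≤ ((S.card+1).choose (t+1) : ℝ) * ((x v + S.card * p)/((S.card:ℝ)+1))^(t+1) := h3
        _ = ((S.card+1).choose (t+1) : ℝ) *
            ((x v + ∑ u ∈ S, x u) / (((S.card:ℕ)+1 : ℕ) : ℝ))^(t+1) := by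
            rw [hσ, hcast]

lemma fclosed (t N : ℕ) (htN : t ≤ N) (hN : 0 < N) :
    (N.choose t : ℝ) / (N:ℝ)^t = (∏ i ∈ range t, (((N:ℝ) - i)/(N:ℝ))) / (t.factorial : ℝ) := by
  have hNd : (N.descFactorial t : ℝ) = ∏ i ∈ range t, ((N:ℝ) - i) := by
    rw [Nat.descFactorial_eq_prod_range]
    push_cast
    refine Finset.prod_congr rfl fun i hi => ?_
    rw [Finset.mem_range] at hi
    rw [Nat.cast_sub (le_trans (Nat.le_of_lt hi) htN)]
  have hfac : (t.factorial : ℝ) * (N.choose t : ℝ) = ∏ i ∈ range t, ((N:ℝ) - i) := by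
    rw [← hNd]
    exact_mod_cast (congrArg (Nat.cast : ℕ → ℝ)
      (Nat.descFactorial_eq_factorial_mul_choose N t)).symm
  have hNpos : (0:ℝ) < (N:ℝ) := by exact_mod_cast hN
  have htpos : (0:ℝ) < (t.factorial : ℝ) := by positivity
  rw [Finset.prod_div_distrib, Finset.prod_const, Finset.card_range, ← hfac]
  field_simp

lemma fmono (t k c : ℕ) (hkc : k ≤ c) :
    (k.choose t : ℝ) / (k:ℝ)^t ≤ (c.choose t : ℝ) / (c:ℝ)^t := by
  rcases Nat.lt_or_ge k t with h | h
  · rw [Nat.choose_eq_zero_of_lt h]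
    simp only [Nat.cast_zero, zero_div]
    positivity
  · rcases Nat.eq_zero_or_pos k with rfl | hk
    · have ht : t = 0 := Nat.le_zero.1 h
      subst ht
      simp
    · have hc : 0 < c := lt_of_lt_of_le hk hkc
      have hkR : (0:ℝ) < (k:ℝ) := by exact_mod_cast hk
      have hcR : (0:ℝ) < (c:ℝ) := by exact_mod_cast hc
      rw [fclosed t k h hk, fclosed t c (h.trans hkc) hc]
      have htpos : (0:ℝ) ≤ (t.factorial : ℝ) := by positivity
      apply div_le_div_of_nonneg_right ?_ ?_
      · apply Finset.prod_le_prod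
        · intro i hi
          rw [Finset.mem_range] at hi
          have : (i:ℝ) ≤ (k:ℝ) := by exact_mod_cast (Nat.le_of_lt hi).trans h
          exact div_nonneg (by linarith) hkR.le
        · intro i hi
          rw [Finset.mem_range] at hi
          rw [div_le_div_iff₀ hkR hcR]
          have : (i:ℝ)*(k:ℝ) ≤ (i:ℝ)*(c:ℝ) :=
            mul_le_mul_of_nonneg_left (by exact_mod_cast hkc) (Nat.cast_nonneg i)
          nlinarith
      · positivity

lemma clique_case {n : ℕ} (t : ℕ) (ht : 2 ≤ t) (G : SimpleGraph (Fin n)) (x : Fin n → ℝ)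
    (hx : x ∈ simplex n)
    (hcl : ∀ i ∈ suppF x, ∀ j ∈ suppF x, i ≠ j → G.Adj i j) :
    ∑ s ∈ ktCliques G t, ∏ v ∈ s, x v ≤
      ∑ v, x v * ((cliqueAt G v).choose t : ℝ) / (cliqueAt G v : ℝ) ^ t := by
  obtain ⟨hx0, hx1⟩ := hx
  set S := suppF x with hSdef
  have hxS : ∀ v, v ∉ S → x v = 0 := by
    intro v hv
    by_contra hne
    exact hv (Finset.mem_filter.2 ⟨Finset.mem_univ v, lt_of_le_of_ne (hx0 v) (Ne.symm hne)⟩)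
  have hSsum : ∑ v ∈ S, x v = 1 := by
    rw [Finset.sum_subset (Finset.subset_univ S) (fun v _ hv => hxS v hv)]
    exact hx1
  have hSclique : G.IsClique (S : Set (Fin n)) := by
    intro i hi j hj hij
    exact hcl i (Finset.mem_coe.1 hi) j (Finset.mem_coe.1 hj) hij
  set k := S.card with hkdef
  -- Step 1 : B ≤ sum over powersetCard t S
  have step1 : ∑ s ∈ ktCliques G t, ∏ v ∈ s, x v ≤
      ∑ s ∈ S.powersetCard t, ∏ v ∈ s, x v := by
    have heq : ∑ s ∈ (ktCliques G t).filter (fun s => s ⊆ S), ∏ v ∈ s, x v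
        = ∑ s ∈ ktCliques G t, ∏ v ∈ s, x v := by
      apply Finset.sum_filter_of_ne
      intro s _ hne
      intro v hv
      by_contra hvS
      exact hne (Finset.prod_eq_zero hv (hxS v hvS))
    rw [← heq]
    apply Finset.sum_le_sum_of_subset_of_nonneg
    · intro s hs
      rw [Finset.mem_filter] at hs
      obtain ⟨hs1, hs2⟩ := hs
      rw [ktCliques, Finset.mem_filter] at hs1
      exact Finset.mem_powersetCard.2 ⟨hs2, hs1.2.1⟩
    · intro s _ _
      exact Finset.prod_nonneg fun v _ => hx0 v
  -- Step 2 : Maclaurin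
  have step2 : ∑ s ∈ S.powersetCard t, ∏ v ∈ s, x v ≤ (k.choose t : ℝ) / (k:ℝ)^t := by
    have := maclaurin t S x hx0
    rw [hSsum] at this
    calc ∑ s ∈ S.powersetCard t, ∏ v ∈ s, x v ≤ (k.choose t : ℝ) * ((1:ℝ)/(k:ℝ))^t := this
      _ = (k.choose t : ℝ) / (k:ℝ)^t := by rw [div_pow, one_pow, mul_one_div]
  -- Step 3 : compare with A
  have hc : ∀ v ∈ S, k ≤ cliqueAt G v := by
    intro v hv
    exact Finset.le_sup (f := Finset.card)
      (Finset.mem_filter.2 ⟨Finset.mem_univ S, hSclique, hv⟩)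
  have step3 : (k.choose t : ℝ) / (k:ℝ)^t ≤
      ∑ v, x v * ((cliqueAt G v).choose t : ℝ) / (cliqueAt G v : ℝ) ^ t := by
    have hterm : ∀ v, x v * ((cliqueAt G v).choose t : ℝ) / (cliqueAt G v : ℝ) ^ t
        = x v * (((cliqueAt G v).choose t : ℝ) / (cliqueAt G v : ℝ) ^ t) := by
      intro v; rw [mul_div_assoc]
    have hsub : ∑ v, x v * ((cliqueAt G v).choose t : ℝ) / (cliqueAt G v : ℝ) ^ t
        = ∑ v ∈ S, x v * (((cliqueAt G v).choose t : ℝ) / (cliqueAt G v : ℝ) ^ t) := by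
      rw [Finset.sum_congr rfl (fun v _ => hterm v)]
      rw [Finset.sum_subset (Finset.subset_univ S)]
      intro v _ hv
      rw [hxS v hv, zero_mul]
    rw [hsub]
    calc (k.choose t : ℝ) / (k:ℝ)^t
        = ∑ v ∈ S, x v * ((k.choose t : ℝ) / (k:ℝ)^t) := by
          rw [← Finset.sum_mul, hSsum, one_mul]
      _ ≤ ∑ v ∈ S, x v * (((cliqueAt G v).choose t : ℝ) / (cliqueAt G v : ℝ) ^ t) := by
          apply Finset.sum_le_sum
          intro v hv
          exact mul_le_mul_of_nonneg_left (fmono t k (cliqueAt G v) (hc v hv)) (hx0 v)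
  linarith

lemma sum_two' {n : ℕ} (f g : Fin n → ℝ) (i j : Fin n) (hij : i ≠ j)
    (h : ∀ v, v ≠ i → v ≠ j → f v = g v) :
    ∑ v, f v = (∑ v, g v) + ((f i + f j) - (g i + g j)) := by
  have hjmem : j ∈ (univ : Finset (Fin n)).erase i := Finset.mem_erase.2 ⟨hij.symm, mem_univ j⟩
  have key : ∀ F : Fin n → ℝ, ∑ v, F v = ∑ v ∈ ((univ : Finset (Fin n)).erase i).erase j, F v
      + F j + F i := by
    intro F
    rw [← Finset.sum_erase_add _ _ (mem_univ i), ← Finset.sum_erase_add _ _ hjmem]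
  rw [key f, key g]
  have : ∑ v ∈ ((univ : Finset (Fin n)).erase i).erase j, f v
      = ∑ v ∈ ((univ : Finset (Fin n)).erase i).erase j, g v := by
    apply Finset.sum_congr rfl
    intro v hv
    rw [Finset.mem_erase, Finset.mem_erase] at hv
    exact h v hv.2.1 hv.1
  rw [this]; ring

lemma key_lemma {n : ℕ} (t : ℕ) (ht : 2 ≤ t) (G : SimpleGraph (Fin n)) :
    ∀ m (x : Fin n → ℝ), x ∈ simplex n → (suppF x).card ≤ m →
    ∑ s ∈ ktCliques G t, ∏ v ∈ s, x v ≤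
      ∑ v, x v * ((cliqueAt G v).choose t : ℝ) / (cliqueAt G v : ℝ) ^ t := by
  intro m
  induction m with
  | zero =>
    intro x hx hcard
    apply clique_case t ht G x hx
    intro i hi
    exfalso
    rw [Finset.card_eq_zero.1 (Nat.le_zero.1 hcard)] at hi
    exact absurd hi (Finset.notMem_empty i)
  | succ m ih =>
    intro x hx hcard
    by_cases hcl : ∀ i ∈ suppF x, ∀ j ∈ suppF x, i ≠ j → G.Adj i j
    · exact clique_case t ht G x hx hcl
    · push_neg at hcl
      obtain ⟨i, hi, j, hj, hij, hnadj⟩ := hcl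
      have hxi : 0 < x i := (Finset.mem_filter.1 hi).2
      have hxj : 0 < x j := (Finset.mem_filter.1 hj).2
      obtain ⟨hx0, hx1⟩ := hx
      set σ : ℝ := x i + x j with hσdef
      have hσ : 0 < σ := by positivity
      set lam : ℝ := x i / σ with hlamdef
      have hlam0 : 0 ≤ lam := by positivity
      have hlam1 : 1 - lam = x j / σ := by
        rw [hlamdef]
        rw [eq_div_iff hσ.ne', sub_mul, one_mul, div_mul_cancel₀ _ hσ.ne', hσdef]
        ring
      have hlam1' : 0 ≤ 1 - lam := by rw [hlam1]; positivity
      set y : Fin n → ℝ := fun v => if v = j then 0 else if v = i then σ else x v with hydef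
      set z : Fin n → ℝ := fun v => if v = i then 0 else if v = j then σ else x v with hzdef
      have hyi : y i = σ := by simp [hydef, hij]
      have hyj : y j = 0 := by simp [hydef]
      have hzi : z i = 0 := by simp [hzdef]
      have hzj : z j = σ := by simp [hzdef, hij.symm]
      have hyv : ∀ v, v ≠ i → v ≠ j → y v = x v := by
        intro v hvi hvj; simp [hydef, hvi, hvj]
      have hzv : ∀ v, v ≠ i → v ≠ j → z v = x v := by
        intro v hvi hvj; simp [hzdef, hvi, hvj]
      -- membership in simplex
      have hy0 : ∀ v, 0 ≤ y v := by
        intro v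
        rcases eq_or_ne v j with rfl | hvj
        · rw [hyj]
        · rcases eq_or_ne v i with rfl | hvi
          · rw [hyi]; exact hσ.le
          · rw [hyv v hvi hvj]; exact hx0 v
      have hz0 : ∀ v, 0 ≤ z v := by
        intro v
        rcases eq_or_ne v i with rfl | hvi
        · rw [hzi]
        · rcases eq_or_ne v j with rfl | hvj
          · rw [hzj]; exact hσ.le
          · rw [hzv v hvi hvj]; exact hx0 v
      have hy1 : ∑ v, y v = 1 := by
        rw [sum_two' y x i j hij hyv, hx1, hyi, hyj]; ring
      have hz1 : ∑ v, z v = 1 := by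
        rw [sum_two' z x i j hij hzv, hx1, hzi, hzj]; ring
      -- support bounds
      have hsy : (suppF y).card ≤ m := by
        have hsub : suppF y ⊆ (suppF x).erase j := by
          intro v hv
          have hvpos : 0 < y v := (Finset.mem_filter.1 hv).2
          have hvj : v ≠ j := by
            rintro rfl; rw [hyj] at hvpos; exact lt_irrefl 0 hvpos
          refine Finset.mem_erase.2 ⟨hvj, ?_⟩
          rcases eq_or_ne v i with rfl | hvi
          · exact hi
          · rw [hyv v hvi hvj] at hvpos
            exact Finset.mem_filter.2 ⟨mem_univ v, hvpos⟩
        calc (suppF y).card ≤ ((suppF x).erase j).card := Finset.card_le_card hsub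
          _ = (suppF x).card - 1 := Finset.card_erase_of_mem hj
          _ ≤ m := by omega
      have hsz : (suppF z).card ≤ m := by
        have hsub : suppF z ⊆ (suppF x).erase i := by
          intro v hv
          have hvpos : 0 < z v := (Finset.mem_filter.1 hv).2
          have hvi : v ≠ i := by
            rintro rfl; rw [hzi] at hvpos; exact lt_irrefl 0 hvpos
          refine Finset.mem_erase.2 ⟨hvi, ?_⟩
          rcases eq_or_ne v j with rfl | hvj
          · exact hj
          · rw [hzv v hvi hvj] at hvpos
            exact Finset.mem_filter.2 ⟨mem_univ v, hvpos⟩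
        calc (suppF z).card ≤ ((suppF x).erase i).card := Finset.card_le_card hsub
          _ = (suppF x).card - 1 := Finset.card_erase_of_mem hi
          _ ≤ m := by omega
      have ihy := ih y ⟨hy0, hy1⟩ hsy
      have ihz := ih z ⟨hz0, hz1⟩ hsz
      -- A is affine
      set w : Fin n → ℝ := fun v =>
        ((cliqueAt G v).choose t : ℝ) / (cliqueAt G v : ℝ) ^ t with hwdef
      have hAterm : ∀ (u : Fin n → ℝ), (∑ v, u v * ((cliqueAt G v).choose t : ℝ)
          / (cliqueAt G v : ℝ) ^ t) = ∑ v, u v * w v := by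
        intro u
        exact Finset.sum_congr rfl fun v _ => by rw [mul_div_assoc]
      have hAy : ∑ v, y v * w v = (∑ v, x v * w v) + x j * w i - x j * w j := by
        rw [sum_two' (fun v => y v * w v) (fun v => x v * w v) i j hij
          (fun v hvi hvj => by show y v * w v = x v * w v; rw [hyv v hvi hvj])]
        simp only [hyi, hyj, hσdef]
        ring
      have hAz : ∑ v, z v * w v = (∑ v, x v * w v) + x i * w j - x i * w i := by
        rw [sum_two' (fun v => z v * w v) (fun v => x v * w v) i j hij
          (fun v hvi hvj => by show z v * w v = x v * w v; rw [hzv v hvi hvj])]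
        simp only [hzi, hzj, hσdef]
        ring
      have hA : lam * (∑ v, y v * w v) + (1 - lam) * (∑ v, z v * w v) = ∑ v, x v * w v := by
        rw [hAy, hAz, hlam1, hlamdef]
        field_simp
        ring
      -- B is affine
      have hB : ∀ s ∈ ktCliques G t, ∏ v ∈ s, x v
          = lam * ∏ v ∈ s, y v + (1 - lam) * ∏ v ∈ s, z v := by
        intro s hs
        rw [ktCliques, Finset.mem_filter] at hs
        obtain ⟨-, hscard, hsclq⟩ := hs
        by_cases his : i ∈ s
        · by_cases hjs : j ∈ s
          · exact absurd (hsclq (Finset.mem_coe.2 his) (Finset.mem_coe.2 hjs) hij) hnadj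
          · -- i ∈ s, j ∉ s
            have hyx : ∀ v ∈ s.erase i, y v = x v := by
              intro v hv
              rw [Finset.mem_erase] at hv
              exact hyv v hv.1 (by rintro rfl; exact hjs hv.2)
            have hPz : ∏ v ∈ s, z v = 0 := Finset.prod_eq_zero his hzi
            rw [hPz, ← Finset.mul_prod_erase s y his, ← Finset.mul_prod_erase s x his,
              Finset.prod_congr rfl hyx, hyi]
            have : lam * σ = x i := by rw [hlamdef]; field_simp
            rw [mul_zero, add_zero, ← mul_assoc, this]
        · by_cases hjs : j ∈ s
          · have hzx : ∀ v ∈ s.erase j, z v = x v := by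
              intro v hv
              rw [Finset.mem_erase] at hv
              exact hzv v (by rintro rfl; exact his hv.2) hv.1
            have hPy : ∏ v ∈ s, y v = 0 := Finset.prod_eq_zero hjs hyj
            rw [hPy, ← Finset.mul_prod_erase s z hjs, ← Finset.mul_prod_erase s x hjs,
              Finset.prod_congr rfl hzx, hzj]
            have : (1 - lam) * σ = x j := by rw [hlam1]; field_simp
            rw [mul_zero, zero_add, ← mul_assoc, this]
          · have hyx : ∀ v ∈ s, y v = x v := fun v hv =>
              hyv v (by rintro rfl; exact his hv) (by rintro rfl; exact hjs hv)
            have hzx : ∀ v ∈ s, z v = x v := fun v hv =>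
              hzv v (by rintro rfl; exact his hv) (by rintro rfl; exact hjs hv)
            rw [Finset.prod_congr rfl hyx, Finset.prod_congr rfl hzx]
            ring
      have hBsum : ∑ s ∈ ktCliques G t, ∏ v ∈ s, x v
          = lam * (∑ s ∈ ktCliques G t, ∏ v ∈ s, y v)
            + (1 - lam) * (∑ s ∈ ktCliques G t, ∏ v ∈ s, z v) := by
        rw [Finset.mul_sum, Finset.mul_sum, ← Finset.sum_add_distrib]
        exact Finset.sum_congr rfl hB
      rw [hAterm x] at *
      rw [hAterm y] at ihy
      rw [hAterm z] at ihz
      rw [hBsum, ← hA]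
      have h1 := mul_le_mul_of_nonneg_left ihy hlam0
      have h2 := mul_le_mul_of_nonneg_left ihz hlam1'
      linarith


/-- `Φ(G, x) ≥ 0` for every `x` in the simplex. -/
theorem stmt2 {n : ℕ} (t : ℕ) (ht : 2 ≤ t) (G : SimpleGraph (Fin n))
    (x : Fin n → ℝ) (hx : x ∈ simplex n) :
    ∑ s ∈ ktCliques G t, ∏ v ∈ s, x v ≤
      ∑ v, x v * ((cliqueAt G v).choose t : ℝ) / (cliqueAt G v : ℝ) ^ t := by
  exact key_lemma t ht G (suppF x).card x hx le_rfl
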